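/- Let b : ℝ → ℝ be defined by b(x) = x·log|x| for x ≠ 0 and b(0) = 0. Then there exists a constant C > 0 such that for every real number N > e and all x, y ∈ ℝ with |x| ≤ N and |y| ≤ N, one has |b(x) − b(y)| ≤ C·(log N)·|x − y| + C·(log N)/N. -/

import Mathlib

open Real

private lemma tri (a b : ℝ) : |a - b| ≤ |a| + |b| := by
  simpa [sub_eq_add_neg] using abs_add_le a (-b)

private lemma lemA {N t : ℝ} (hN : Real.exp 1 < N) (ht0 : 0 < t) (ht : t ≤ 1 / N) :
    t * |Real.log t| ≤ Real.log N / N := by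
  have hN0 : 0 < N := (Real.exp_pos 1).trans hN
  have hN1 : 1 < N := by nlinarith [Real.add_one_le_exp 1]
  have h1t : t * N ≤ 1 := (le_div_iff₀ hN0).1 ht
  have hs : N ≤ 1 / t := (le_div_iff₀ ht0).2 (by nlinarith)
  have h1 : Real.log (1 / t) / (1 / t) ≤ Real.log N / N :=
    Real.log_div_self_antitoneOn (by simpa using hN.le)
      (by exact hN.le.trans hs) hs
  have ht1 : t < 1 := lt_of_le_of_lt ht (by rw [div_lt_one hN0]; exact hN1)
  have heq : Real.log (1 / t) / (1 / t) = t * |Real.log t| := by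
    rw [one_div, Real.log_inv, abs_of_nonpos (Real.log_nonpos ht0.le ht1.le),
      div_eq_mul_inv, inv_inv]
    ring
  linarith [heq ▸ h1]

private lemma lemB {N x y : ℝ} (hN0 : 0 < N) (hx : |x| ≤ N) (hy : 1 / N ≤ |y|)
    (hyx : |y| ≤ |x|) :
    abs (x * Real.log |x| - y * Real.log |y|) ≤ (Real.log N + 1) * |x - y| := by
  have hy0 : 0 < |y| := lt_of_lt_of_le (by positivity) hy
  have hx0 : 0 < |x| := lt_of_lt_of_le hy0 hyx
  have key : x * Real.log |x| - y * Real.log |y|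
      = (x - y) * Real.log |x| + y * (Real.log |x| - Real.log |y|) := by ring
  rw [key]
  have hN1 : 1 ≤ N := by
    have h' := hy.trans (hyx.trans hx)
    rw [div_le_iff₀ hN0] at h'
    nlinarith
  have hlogN : 0 ≤ Real.log N := Real.log_nonneg hN1
  have hlogx : abs (Real.log |x|) ≤ Real.log N := by
    rw [abs_le]
    constructor
    · have h := Real.log_le_log (by positivity : (0:ℝ) < N⁻¹)
        (le_trans (by rwa [one_div] at hy) hyx)
      rwa [Real.log_inv] at h
    · exact Real.log_le_log hx0 hx
  have hmono : Real.log |y| ≤ Real.log |x| := Real.log_le_log hy0 hyx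
  have hdiff : |y| * (Real.log |x| - Real.log |y|) ≤ |x| - |y| := by
    have h2 : Real.log (|x| / |y|) ≤ |x| / |y| - 1 :=
      Real.log_le_sub_one_of_pos (by positivity)
    rw [Real.log_div (ne_of_gt hx0) (ne_of_gt hy0)] at h2
    calc |y| * (Real.log |x| - Real.log |y|) ≤ |y| * (|x| / |y| - 1) := by
          exact mul_le_mul_of_nonneg_left h2 hy0.le
      _ = |x| - |y| := by field_simp
  calc abs ((x - y) * Real.log |x| + y * (Real.log |x| - Real.log |y|))
      ≤ abs ((x - y) * Real.log |x|) + abs (y * (Real.log |x| - Real.log |y|)) :=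
        abs_add_le _ _
    _ ≤ |x - y| * Real.log N + (|x| - |y|) := by
        rw [abs_mul, abs_mul]
        have b1 : |x - y| * abs (Real.log |x|) ≤ |x - y| * Real.log N :=
          mul_le_mul_of_nonneg_left hlogx (abs_nonneg _)
        have b2 : |y| * abs (Real.log |x| - Real.log |y|) ≤ |x| - |y| := by
          rw [abs_of_nonneg (show (0:ℝ) ≤ Real.log |x| - Real.log |y| by linarith)]
          exact hdiff
        linarith
    _ ≤ |x - y| * Real.log N + |x - y| := by
        have := abs_sub_abs_le_abs_sub x y
        linarith
    _ = (Real.log N + 1) * |x - y| := by ring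

private lemma main_aux {N x y : ℝ} (hN : Real.exp 1 < N) (hyx : |y| ≤ |x|)
    (hx : |x| ≤ N) :
    abs (x * Real.log |x| - y * Real.log |y|) ≤
      8 * Real.log N * |x - y| + 8 * Real.log N / N := by
  have hN0 : 0 < N := (Real.exp_pos 1).trans hN
  have hL : 1 < Real.log N := (Real.lt_log_iff_exp_lt hN0).2 hN
  have habs : (0:ℝ) ≤ |x - y| := abs_nonneg _
  have hLN : 0 < Real.log N / N := by positivity
  by_cases hyN : 1 / N ≤ |y|
  · have h := lemB hN0 hx hyN hyx
    have h8 : (Real.log N + 1) * |x - y| ≤ 8 * Real.log N * |x - y| := by nlinarith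
    rw [mul_div_assoc]
    linarith
  · push_neg at hyN
    have hby : abs (y * Real.log |y|) ≤ Real.log N / N := by
      rcases eq_or_ne y 0 with rfl | hy0
      · simp; positivity
      · rw [abs_mul]
        exact lemA hN (abs_pos.2 hy0) hyN.le
    by_cases hxN : |x| ≤ 1 / N
    · have hbx : abs (x * Real.log |x|) ≤ Real.log N / N := by
        rcases eq_or_ne x 0 with rfl | hx0
        · simp; positivity
        · rw [abs_mul]
          exact lemA hN (abs_pos.2 hx0) hxN
      calc abs (x * Real.log |x| - y * Real.log |y|)
          ≤ abs (x * Real.log |x|) + abs (y * Real.log |y|) := tri _ _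
        _ ≤ 8 * Real.log N * |x - y| + 8 * Real.log N / N := by
            rw [mul_div_assoc]
            nlinarith
    · push_neg at hxN
      set x' : ℝ := x / (N * |x|) with hx'
      have hx0 : 0 < |x| := lt_trans (by positivity) hxN
      have hxx' : |x'| = 1 / N := by
        rw [hx', abs_div, abs_of_pos (by positivity : (0:ℝ) < N * |x|)]
        field_simp
      have hbx' : abs (x' * Real.log |x'|) = Real.log N / N := by
        rw [abs_mul, hxx', one_div, Real.log_inv, abs_neg,
          abs_of_nonneg (by linarith : (0:ℝ) ≤ Real.log N)]
        ring
      have hNx1 : 1 < N * |x| := by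
        have := (div_lt_iff₀ hN0).1 hxN
        nlinarith
      have hdist : |x - x'| = |x| - 1 / N := by
        have h1 : x - x' = x * (1 - 1 / (N * |x|)) := by
          rw [hx']; field_simp
        have h2 : 1 / (N * |x|) < 1 := by
          rw [div_lt_one (by positivity)]; exact hNx1
        rw [h1, abs_mul, abs_of_nonneg (by linarith : (0:ℝ) ≤ 1 - 1 / (N * |x|))]
        field_simp
      have hBx : abs (x * Real.log |x| - x' * Real.log |x'|)
          ≤ (Real.log N + 1) * |x - x'| :=
        lemB hN0 hx (le_of_eq hxx'.symm) (by rw [hxx']; exact hxN.le)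
      have hdy : |x| - 1 / N ≤ |x - y| := by
        have := abs_sub_abs_le_abs_sub x y
        linarith
      calc abs (x * Real.log |x| - y * Real.log |y|)
          ≤ abs (x * Real.log |x| - x' * Real.log |x'|)
            + abs (x' * Real.log |x'| - y * Real.log |y|) := abs_sub_le _ _ _
        _ ≤ (Real.log N + 1) * |x - x'|
            + (abs (x' * Real.log |x'|) + abs (y * Real.log |y|)) := by
            linarith [tri (x' * Real.log |x'|) (y * Real.log |y|)]
        _ ≤ (Real.log N + 1) * |x - y| + 2 * (Real.log N / N) := by
            rw [hdist]
            have h0 : (0:ℝ) ≤ Real.log N + 1 := by linarith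
            nlinarith
        _ ≤ 8 * Real.log N * |x - y| + 8 * Real.log N / N := by
            rw [mul_div_assoc]
            nlinarith

/-- Verification of the drift inequality of hypothesis (H1) (with μ = 1) for the
drift coefficient `b x = x * log |x|` (with `b 0 = 0`, which holds automatically
since `Real.log 0 = 0`). -/
theorem drift_H1_xlogx :
    ∃ C : ℝ, 0 < C ∧
      ∀ N : ℝ, Real.exp 1 < N → ∀ x y : ℝ, |x| ≤ N → |y| ≤ N →
        abs (x * Real.log |x| - y * Real.log |y|) ≤
          C * Real.log N * |x - y| + C * Real.log N / N := by
  refine ⟨8, by norm_num, ?_⟩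
  intro N hN x y hx hy
  rcases le_total |y| |x| with h | h
  · exact main_aux hN h hx
  · have h2 := main_aux hN h hy
    rwa [abs_sub_comm, abs_sub_comm y x] at h2
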